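/- Let C ⊆ ℝᵐ be a nonempty closed convex set and suppose A has full row rank (Aᵀ is injective). Let (x_k), (z_k), (y_k), (v_k), (d_k), (ε_k), (μ_k) be sequences with z_k ∈ C, ε_k > 0, ε_k → 0, μ_k > 0, μ_k → μ̄ for some μ̄ > 0, d_k → 0, and suppose for every k: ‖μ_k ∇f(x_k) + Aᵀ y_k + d_k‖ ≤ ε_k; ⟨v_k, c − z_k⟩ ≤ 0 for all c ∈ C; and ‖y_k − v_k‖ ≤ ε_k. If x_k → x̄ and z_k → z̄ with A x̄ = z̄ (so x̄ is feasible), then x̄ is a KKT point of the problem of minimizing f over {x : Ax ∈ C}: there exists ȳ ∈ ℝᵐ with ∇f(x̄) + Aᵀ ȳ = 0 and ⟨ȳ, c − A x̄⟩ ≤ 0 for all c ∈ C. -/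
import Mathlib


open Matrix Filter
open scoped RealInnerProductSpace Topology

theorem stmt15 (n m : ℕ) (Q : Matrix (Fin n) (Fin n) ℝ) (hQ : Q.PosSemidef)
    (q : EuclideanSpace ℝ (Fin n)) (A : Matrix (Fin m) (Fin n) ℝ)
    (C : Set (EuclideanSpace ℝ (Fin m))) (hCne : C.Nonempty) (hCcl : IsClosed C)
    (hCconv : Convex ℝ C)
    (hA : Function.Injective (Matrix.toEuclideanLin Aᵀ))
    (f : EuclideanSpace ℝ (Fin n) → ℝ)
    (hf : ∀ x, f x = (1/2) * ⟪x, Matrix.toEuclideanLin Q x⟫ + ⟪q, x⟫)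
    (x d : ℕ → EuclideanSpace ℝ (Fin n)) (z y v : ℕ → EuclideanSpace ℝ (Fin m))
    (ε μs : ℕ → ℝ) (μbar : ℝ)
    (hz : ∀ k, z k ∈ C)
    (hε : ∀ k, 0 < ε k) (hεlim : Tendsto ε atTop (𝓝 0))
    (hμs : ∀ k, 0 < μs k) (hμlim : Tendsto μs atTop (𝓝 μbar)) (hμbar : 0 < μbar)
    (hdlim : Tendsto d atTop (𝓝 0))
    (hstat : ∀ k, ‖μs k • (Matrix.toEuclideanLin Q (x k) + q)
        + Matrix.toEuclideanLin Aᵀ (y k) + d k‖ ≤ ε k)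
    (hnormal : ∀ k, ∀ c ∈ C, ⟪v k, c - z k⟫ ≤ 0)
    (hyv : ∀ k, ‖y k - v k‖ ≤ ε k)
    (xbar : EuclideanSpace ℝ (Fin n)) (zbar : EuclideanSpace ℝ (Fin m))
    (hxlim : Tendsto x atTop (𝓝 xbar)) (hzlim : Tendsto z atTop (𝓝 zbar))
    (hfeas : Matrix.toEuclideanLin A xbar = zbar) :
    ∃ ybar : EuclideanSpace ℝ (Fin m),
      Matrix.toEuclideanLin Q xbar + q + Matrix.toEuclideanLin Aᵀ ybar = 0 ∧
      ∀ c ∈ C, ⟪ybar, c - Matrix.toEuclideanLin A xbar⟫ ≤ 0 := by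
  set T : EuclideanSpace ℝ (Fin m) →ₗ[ℝ] EuclideanSpace ℝ (Fin n) :=
    Matrix.toEuclideanLin Aᵀ with hT
  set S : EuclideanSpace ℝ (Fin n) →ₗ[ℝ] EuclideanSpace ℝ (Fin n) :=
    Matrix.toEuclideanLin Q with hS
  -- the residual
  have hr : Tendsto (fun k => μs k • (S (x k) + q) + T (y k) + d k) atTop (𝓝 0) :=
    squeeze_zero_norm hstat hεlim
  have hSx : Tendsto (fun k => S (x k) + q) atTop (𝓝 (S xbar + q)) :=
    ((S.continuous_of_finiteDimensional.tendsto _).comp hxlim).add tendsto_const_nhds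
  have hTy : Tendsto (fun k => T (y k)) atTop (𝓝 (-(μbar • (S xbar + q)))) := by
    have h := (hr.sub (hμlim.smul hSx)).sub hdlim
    have heq : (fun k => (μs k • (S (x k) + q) + T (y k) + d k)
        - μs k • (S (x k) + q) - d k) = fun k => T (y k) := by
      funext k; abel
    rw [heq] at h
    simpa using h
  set w : EuclideanSpace ℝ (Fin n) := -(μbar • (S xbar + q)) with hw
  have hrange : w ∈ LinearMap.range T := by
    have hclosed : IsClosed (LinearMap.range T : Set (EuclideanSpace ℝ (Fin n))) :=
      (LinearMap.range T).closed_of_finiteDimensional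
    exact hclosed.mem_of_tendsto hTy (Filter.Eventually.of_forall fun k => ⟨y k, rfl⟩)
  set e : EuclideanSpace ℝ (Fin m) ≃ₗ[ℝ] LinearMap.range T := LinearEquiv.ofInjective T hA
  set ybar' : EuclideanSpace ℝ (Fin m) := e.symm ⟨w, hrange⟩ with hybar'
  have hTybar' : T ybar' = w := by
    have := e.apply_symm_apply ⟨w, hrange⟩
    have h2 : ((e ybar' : LinearMap.range T) : EuclideanSpace ℝ (Fin n)) = T ybar' := rfl
    rw [this] at h2
    exact h2.symm
  have hylim : Tendsto y atTop (𝓝 ybar') := by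
    have hsub : Tendsto (fun k => (⟨T (y k), ⟨y k, rfl⟩⟩ : LinearMap.range T)) atTop
        (𝓝 ⟨w, hrange⟩) := by
      rw [tendsto_subtype_rng]; exact hTy
    have hcont : Continuous (e.symm : LinearMap.range T → EuclideanSpace ℝ (Fin m)) :=
      e.symm.toLinearMap.continuous_of_finiteDimensional
    have h := (hcont.tendsto _).comp hsub
    have heq : (fun k => e.symm (⟨T (y k), ⟨y k, rfl⟩⟩ : LinearMap.range T)) = y := by
      funext k
      have : (⟨T (y k), ⟨y k, rfl⟩⟩ : LinearMap.range T) = e (y k) := by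
        apply Subtype.ext; rfl
      rw [this, e.symm_apply_apply]
    have h2 : Tendsto (fun k => e.symm (⟨T (y k), ⟨y k, rfl⟩⟩ : LinearMap.range T))
        atTop (𝓝 ybar') := h
    rwa [heq] at h2
  have hvlim : Tendsto v atTop (𝓝 ybar') := by
    have hd0 : Tendsto (fun k => y k - v k) atTop (𝓝 0) := squeeze_zero_norm hyv hεlim
    have := hylim.sub hd0
    simpa using this
  refine ⟨μbar⁻¹ • ybar', ?_, ?_⟩
  · have : T (μbar⁻¹ • ybar') = μbar⁻¹ • w := by rw [T.map_smul, hTybar']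
    rw [hT] at this
    rw [this, hw]
    rw [smul_neg, smul_smul, inv_mul_cancel₀ hμbar.ne', one_smul]
    show S xbar + q + -(S xbar + q) = 0
    abel
  · intro c hc
    have hlim : Tendsto (fun k => ⟪v k, c - z k⟫) atTop (𝓝 ⟪ybar', c - zbar⟫) :=
      hvlim.inner (tendsto_const_nhds.sub hzlim)
    have hle : ⟪ybar', c - zbar⟫ ≤ 0 :=
      le_of_tendsto hlim (Filter.Eventually.of_forall fun k => hnormal k c hc)
    rw [hfeas, real_inner_smul_left]
    exact mul_nonpos_of_nonneg_of_nonpos (inv_nonneg.2 hμbar.le) hle
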